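/- Let n be a positive integer, δ ∈ {0, 1}, A, B real with −1 < B ≤ 0 < A ≤ 1, and β ∈ ℂ \ {0} with |β| ≥ ((1 + e²)^{(3−n)/2}/(√2 e)^{1−n}) ((1 + A)/(1 + B) + ω₀^δ). If p ∈ ℋ satisfies p(z) ≠ 0 on 𝔻 and (p(z))^δ + β z p′(z)/(p(z))^n ≺ (1 + Az)/(1 + Bz), then p(z) ≺ 𝔅(z). -/

import Mathlib

open Complex

noncomputable section

/-- The open unit disk in the complex plane. -/
def unitDisk : Set ℂ := Metric.ball 0 1

/-- `f` is subordinate to `g` on the unit disk: there is an analytic Schwarz function `w`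
with `w 0 = 0`, `|w z| < 1` on the disk, and `f = g ∘ w` on the disk. -/
def Subord (f g : ℂ → ℂ) : Prop :=
  ∃ w : ℂ → ℂ, DifferentiableOn ℂ w unitDisk ∧ w 0 = 0 ∧
    (∀ z ∈ unitDisk, ‖w z‖ < 1) ∧ ∀ z ∈ unitDisk, f z = g (w z)

/-- The function `𝔅(z) = √(1 + tanh z)` (principal branch). -/
def bean (z : ℂ) : ℂ := (1 + Complex.tanh z) ^ ((1 : ℂ) / 2)

/-- `R₀ = e √(2/(e² - 1))`. -/
def R₀ : ℝ := Real.exp 1 * Real.sqrt (2 / (Real.exp 1 ^ 2 - 1))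

/-- `ω₀ = max_{θ ∈ [0, 2π)} |𝔅(e^{iθ})|`. -/
def ω₀ : ℝ :=
  sSup ((fun θ : ℝ => ‖bean (Complex.exp (θ * Complex.I))‖) '' Set.Ico 0 (2 * Real.pi))

section helpers

lemma half_re' : ((1:ℂ)/2).re = 1/2 := by norm_num [Complex.div_re]
lemma half_im' : ((1:ℂ)/2).im = 0 := by norm_num [Complex.div_im]

lemma abs_add_ge' (x y : ℂ) : ‖x‖ - ‖y‖ ≤ ‖x + y‖ := by
  have h := norm_sub_norm_le x (-y)
  simpa [sub_neg_eq_add] using h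

lemma abs_sub_le'' (x y : ℂ) : ‖x - y‖ ≤ ‖x‖ + ‖y‖ := by
  rw [sub_eq_add_neg]
  refine le_trans (norm_add_le _ _) ?_
  rw [norm_neg]

lemma sq_cpow_half {a : ℂ} (ha : 0 < a.re) : (a ^ 2) ^ ((1:ℂ)/2) = a := by
  have ha0 : a ≠ 0 := by
    intro h; rw [h] at ha; simp at ha
  have harg : |Complex.arg a| < Real.pi / 2 :=
    Complex.abs_arg_lt_pi_div_two_iff.mpr (Or.inl ha)
  have hexp : Complex.exp (Complex.log a) = a := Complex.exp_log ha0
  have hsq : a ^ 2 = Complex.exp (2 * Complex.log a) := by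
    rw [two_mul, Complex.exp_add, hexp]; ring
  have him : (2 * Complex.log a).im = 2 * Complex.arg a := by
    simp [Complex.log_im]
  have hlog : Complex.log (a ^ 2) = 2 * Complex.log a := by
    rw [hsq, Complex.log_exp] <;> rw [him]
    · rw [abs_lt] at harg; linarith [harg.1]
    · rw [abs_lt] at harg; linarith [harg.2, Real.pi_pos]
  rw [Complex.cpow_def_of_ne_zero (pow_ne_zero 2 ha0), hlog]
  rw [show 2 * Complex.log a * (1/2) = Complex.log a by ring, hexp]

lemma abs_log_le' {u : ℂ} (h : ‖u - 1‖ ≤ 0.291) :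
    ‖Complex.log u‖ ≤ 0.36 := by
  have h1 : 1 + (u - 1) = u := by ring
  have hr0 : (0:ℝ) ≤ ‖u - 1‖ := norm_nonneg _
  have hr : ‖u - 1‖ ≤ 0.291 := by exact h
  have hn : ‖u - 1‖ < 1 := by linarith
  have hb := Complex.norm_log_one_add_le hn
  rw [h1] at hb
  set r := ‖u - 1‖ with hrdef
  have hinv : (1 - r)⁻¹ ≤ (0.709:ℝ)⁻¹ := by
    apply inv_anti₀ (by norm_num) (by linarith)
  calc ‖Complex.log u‖ ≤ r ^ 2 * (1 - r)⁻¹ / 2 + r := hb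
    _ ≤ 0.291 ^ 2 * (0.709:ℝ)⁻¹ / 2 + 0.291 := by
        have h2 : r^2 * (1-r)⁻¹ ≤ 0.291^2 * (0.709:ℝ)⁻¹ := by
          apply mul_le_mul (by nlinarith) hinv (inv_nonneg.mpr (by linarith)) (by positivity)
        linarith
    _ ≤ 0.36 := by norm_num

lemma abs_bean_le' {ζ : ℂ} (hζ : ‖ζ‖ ≤ 1) : ‖bean ζ‖ ≤ 9 := by
  set u := 1 + Complex.tanh ζ with hu
  have habs : ‖bean ζ‖ ≤ Real.sqrt (‖u‖) := by
    rcases eq_or_ne u 0 with h0 | h0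
    · rw [bean, ← hu, h0, Complex.zero_cpow (by norm_num)]
      simp [Real.sqrt_nonneg]
    · rw [bean, ← hu, Complex.norm_cpow_of_ne_zero h0, half_re', half_im']
      simp only [mul_zero, Real.exp_zero, div_one]
      rw [← Real.sqrt_eq_rpow]
  have hre : |ζ.re| ≤ 1 := le_trans (Complex.abs_re_le_norm ζ) hζ
  have him : |ζ.im| ≤ 1 := le_trans (Complex.abs_im_le_norm ζ) hζ
  have hcos1 : (1:ℝ)/2 ≤ Real.cos 1 := by
    have := Real.one_sub_sq_div_two_le_cos (x := 1); norm_num at this; linarith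
  have hE : (2.7182818283 : ℝ) < Real.exp 1 := Real.exp_one_gt_d9
  have hE' : Real.exp 1 < 2.7182818286 := Real.exp_one_lt_d9
  have habs_exp : ∀ w : ℂ, ‖w‖ ≤ 1 → ‖Complex.exp w‖ ≤ Real.exp 1 := by
    intro w hw
    rw [Complex.norm_exp]
    exact Real.exp_le_exp.mpr (le_trans (le_abs_self _) (le_trans (Complex.abs_re_le_norm w) hw))
  have hreexp : ∀ w : ℂ, |w.re| ≤ 1 → |w.im| ≤ 1 →
      Real.exp (-1) * Real.cos 1 ≤ (Complex.exp w).re := by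
    intro w hwre hwim
    rw [Complex.exp_re]
    have h1 : Real.exp (-1) ≤ Real.exp w.re := by
      apply Real.exp_le_exp.mpr; rw [abs_le] at hwre; linarith [hwre.1]
    have h2 : Real.cos 1 ≤ Real.cos w.im := by
      rw [← Real.cos_abs w.im]
      exact Real.cos_le_cos_of_nonneg_of_le_pi (abs_nonneg _)
        (by linarith [Real.pi_gt_three]) hwim
    have hc0 : (0:ℝ) < Real.cos 1 := by linarith
    nlinarith [Real.exp_pos (-1), Real.exp_pos w.re]
  have hcosh : Real.exp (-1) * Real.cos 1 ≤ ‖Complex.cosh ζ‖ := by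
    have h1 : (Complex.cosh ζ).re = ((Complex.exp ζ).re + (Complex.exp (-ζ)).re) / 2 := by
      rw [Complex.cosh]; simp [Complex.div_re]
    have h2 := hreexp ζ hre him
    have h3 := hreexp (-ζ) (by rwa [Complex.neg_re, abs_neg]) (by rwa [Complex.neg_im, abs_neg])
    calc Real.exp (-1) * Real.cos 1 ≤ (Complex.cosh ζ).re := by rw [h1]; linarith
      _ ≤ ‖Complex.cosh ζ‖ := Complex.re_le_norm _
  have hsinh : ‖Complex.sinh ζ‖ ≤ Real.exp 1 := by
    rw [Complex.sinh]
    calc ‖(Complex.exp ζ - Complex.exp (-ζ)) / 2‖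
        ≤ (‖Complex.exp ζ‖ + ‖Complex.exp (-ζ)‖) / 2 := by
          rw [norm_div, Complex.norm_two]
          gcongr
          exact abs_sub_le'' _ _
      _ ≤ (Real.exp 1 + Real.exp 1) / 2 := by
          have := habs_exp ζ hζ
          have := habs_exp (-ζ) (by rwa [norm_neg])
          linarith
      _ ≤ Real.exp 1 := by linarith
  have htanh : ‖Complex.tanh ζ‖ ≤ 16 := by
    rw [Complex.tanh_eq_sinh_div_cosh, norm_div]
    have hc0 : (0:ℝ) < Real.exp (-1) * Real.cos 1 := by positivity
    rw [div_le_iff₀ (lt_of_lt_of_le hc0 hcosh)]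
    calc ‖Complex.sinh ζ‖ ≤ Real.exp 1 := hsinh
      _ ≤ 16 * (Real.exp (-1) * Real.cos 1) := by
          rw [Real.exp_neg]
          have hext : Real.exp 1 * (Real.exp 1)⁻¹ = 1 := mul_inv_cancel₀ (Real.exp_pos 1).ne'
          nlinarith [Real.exp_pos 1, inv_pos.mpr (Real.exp_pos 1)]
      _ ≤ 16 * ‖Complex.cosh ζ‖ := by nlinarith
  have huabs : ‖u‖ ≤ 17 := by
    calc ‖u‖ ≤ ‖1‖ + ‖Complex.tanh ζ‖ := norm_add_le _ _
      _ ≤ 1 + 16 := by rw [norm_one]; linarith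
      _ = 17 := by norm_num
  calc ‖bean ζ‖ ≤ Real.sqrt (‖u‖) := habs
    _ ≤ Real.sqrt 81 := Real.sqrt_le_sqrt (by linarith)
    _ = 9 := by rw [show (81:ℝ) = 9^2 by norm_num, Real.sqrt_sq (by norm_num)]

lemma omega_bdd' : BddAbove ((fun θ : ℝ =>
    ‖bean (Complex.exp (θ * Complex.I))‖) '' Set.Ico 0 (2 * Real.pi)) := by
  refine ⟨9, ?_⟩
  rintro x ⟨θ, -, rfl⟩
  exact abs_bean_le' (by rw [Complex.norm_exp]; simp)

lemma omega_ge' : (1.14 : ℝ) ≤ ω₀ := by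
  have hmem : ‖bean (Complex.exp ((0:ℝ) * Complex.I))‖ ∈
      ((fun θ : ℝ => ‖bean (Complex.exp (θ * Complex.I))‖) ''
        Set.Ico 0 (2 * Real.pi)) :=
    ⟨0, ⟨le_refl 0, by positivity⟩, rfl⟩
  have h2 : (1.14:ℝ) ≤ ‖bean (Complex.exp ((0:ℝ) * Complex.I))‖ := by
    have h0 : ((0:ℝ):ℂ) * Complex.I = 0 := by simp
    rw [h0, Complex.exp_zero]
    have htanh : (1:ℂ) + Complex.tanh 1 = ((1 + Real.tanh 1 : ℝ) : ℂ) := by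
      push_cast [← Complex.ofReal_tanh]; norm_num
    have htanh1 : (0.2996:ℝ) ≤ Real.tanh 1 := by
      rw [Real.tanh_eq_sinh_div_cosh, Real.sinh_eq, Real.cosh_eq]
      have hE : (2.7182818283 : ℝ) < Real.exp 1 := Real.exp_one_gt_d9
      have hpos : (0:ℝ) < (Real.exp 1 + Real.exp (-1))/2 := by positivity
      rw [le_div_iff₀ hpos, Real.exp_neg]
      have hext : Real.exp 1 * (Real.exp 1)⁻¹ = 1 := mul_inv_cancel₀ (Real.exp_pos 1).ne'
      nlinarith [inv_pos.mpr (Real.exp_pos 1)]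
    have hpos : (0:ℝ) < 1 + Real.tanh 1 := by linarith
    rw [bean, htanh, Complex.norm_cpow_eq_rpow_re_of_pos hpos, half_re', ← Real.sqrt_eq_rpow]
    have h114 : (1.14:ℝ) = Real.sqrt (1.2996) := by
      rw [show (1.2996:ℝ) = 1.14^2 by norm_num, Real.sqrt_sq (by norm_num)]
    rw [h114]
    exact Real.sqrt_le_sqrt (by linarith)
  exact le_trans h2 (le_csSup omega_bdd' hmem)

lemma key_numeric' (n : ℕ) (hn : 0 < n) (δ : ℕ) (G : ℝ) (hG : 1 ≤ G) (ω : ℝ) (hω : 1.14 ≤ ω)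
    (Babs : ℝ)
    (hβ : (1 + Real.exp 1 ^ 2) ^ ((3 - (n : ℝ)) / 2) /
          (Real.sqrt 2 * Real.exp 1) ^ (1 - (n : ℝ)) * (G + ω ^ δ) ≤ Babs) :
    (G + (1.14:ℝ) ^ δ) * 1.14 ^ n ≤ 0.136 * Babs := by
  obtain ⟨m, rfl⟩ : ∃ m, n = m + 1 := ⟨n - 1, by omega⟩
  set E := Real.exp 1 with hEdef
  have hE : (2.7182818283 : ℝ) < E := Real.exp_one_gt_d9
  have hE' : E < 2.7182818286 := Real.exp_one_lt_d9
  have hE2 : (7.389:ℝ) < E^2 := by nlinarith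
  have hE2' : E^2 < 7.3891 := by nlinarith
  have h1E2 : (0:ℝ) < 1 + E^2 := by linarith
  set t := Real.sqrt (1 + E^2) with htdef
  have ht2 : t^2 = 1 + E^2 := Real.sq_sqrt h1E2.le
  have htpos : 0 < t := Real.sqrt_pos.mpr h1E2
  set s := Real.sqrt 2 * E with hsdef
  have hspos : (0:ℝ) < s := by positivity
  have hcoef : (1 + E ^ 2) ^ ((3 - ((m+1 : ℕ) : ℝ)) / 2) / s ^ (1 - ((m+1 : ℕ) : ℝ))
      = (1 + E^2) * (s / t) ^ m := by
    have h3 : (3 - ((m+1 : ℕ) : ℝ)) / 2 = 1 + (1/2) * (-(m:ℝ)) := by push_cast; ring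
    have h1 : (1 - ((m+1 : ℕ) : ℝ)) = -(m:ℝ) := by push_cast; ring
    rw [h3, h1, Real.rpow_add h1E2, Real.rpow_one, Real.rpow_mul h1E2.le,
      ← Real.sqrt_eq_rpow, ← htdef, Real.rpow_neg htpos.le, Real.rpow_natCast,
      Real.rpow_neg hspos.le, Real.rpow_natCast, div_pow]
    field_simp
  rw [hcoef] at hβ
  have hq : (1.14:ℝ) ≤ s / t := by
    have hq2 : (s/t)^2 = 2 * E^2 / (1+E^2) := by
      rw [div_pow, hsdef, mul_pow, Real.sq_sqrt (by norm_num : (0:ℝ) ≤ 2), ht2]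
    have hqpos : 0 < s / t := by positivity
    have hq2' : (s/t)^2 * (1+E^2) = 2*E^2 := by rw [hq2]; field_simp
    nlinarith [hq2', hqpos, sq_nonneg (s/t - 1.14)]
  have hδ : (1.14:ℝ)^δ ≤ ω^δ := pow_le_pow_left₀ (by norm_num) hω δ
  have hm : (1.14:ℝ)^m ≤ (s/t)^m := pow_le_pow_left₀ (by norm_num) hq m
  have h114 : (1.14:ℝ) ≤ 0.136 * (1+E^2) := by nlinarith
  have hGω : (0:ℝ) < G + ω^δ := by positivity
  calc (G + (1.14:ℝ) ^ δ) * 1.14 ^ (m+1) ≤ (G + ω ^ δ) * 1.14 ^ (m+1) := by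
        apply mul_le_mul_of_nonneg_right (by linarith) (by positivity)
    _ ≤ (G + ω ^ δ) * (0.136 * ((1 + E^2) * (s/t)^m)) := by
        apply mul_le_mul_of_nonneg_left ?_ (by positivity)
        calc (1.14:ℝ)^(m+1) = 1.14 * 1.14^m := by ring
          _ ≤ (0.136*(1+E^2)) * (s/t)^m := by
              apply mul_le_mul h114 hm (by positivity) (by nlinarith)
          _ = 0.136 * ((1 + E^2) * (s/t)^m) := by ring
    _ = 0.136 * ((1 + E^2) * (s/t)^m * (G + ω ^ δ)) := by ring
    _ ≤ 0.136 * Babs := by nlinarith [hβ]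

end helpers

set_option maxHeartbeats 2000000 in
theorem stmt_8 (n : ℕ) (hn : 0 < n) (δ : ℕ) (hδ : δ = 0 ∨ δ = 1)
    (A B : ℝ) (hB1 : -1 < B) (hB0 : B ≤ 0) (hA0 : 0 < A) (hA1 : A ≤ 1)
    (β : ℂ) (hβ0 : β ≠ 0)
    (hβ : (1 + Real.exp 1 ^ 2) ^ ((3 - (n : ℝ)) / 2) /
          (Real.sqrt 2 * Real.exp 1) ^ (1 - (n : ℝ)) *
        ((1 + A) / (1 + B) + ω₀ ^ δ) ≤ ‖β‖)
    (p : ℂ → ℂ) (hp : DifferentiableOn ℂ p unitDisk) (hp0 : p 0 = 1)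
    (hpne : ∀ z ∈ unitDisk, p z ≠ 0)
    (hsub : Subord (fun z => p z ^ δ + β * (z * deriv p z) / p z ^ n)
        (fun z => (1 + (A : ℂ) * z) / (1 + (B : ℂ) * z))) :
    Subord p bean := by
  obtain ⟨v, hvd, hv0, hvlt, hveq⟩ := hsub
  have hOpen : IsOpen unitDisk := Metric.isOpen_ball
  have hmem : ∀ z : ℂ, z ∈ unitDisk ↔ ‖z‖ < 1 := by
    intro z; rw [unitDisk, Metric.mem_ball, Complex.dist_eq, sub_zero]
  have h0mem : (0:ℂ) ∈ unitDisk := by rw [hmem]; simp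
  have hβpos : 0 < ‖β‖ := norm_pos_iff.mpr hβ0
  set G := (1+A)/(1+B) with hGdef
  have hBpos : (0:ℝ) < 1 + B := by linarith
  have hApos : (0:ℝ) < 1 + A := by linarith
  have hG1 : 1 ≤ G := (le_div_iff₀ hBpos).mpr (by linarith)
  have hGpos : (0:ℝ) < G := lt_of_lt_of_le one_pos hG1
  have step1 : ∀ z ∈ unitDisk, ‖p z ^ δ + β * (z * deriv p z) / p z ^ n‖ < G := by
    intro z hz
    have hveqz := hveq z hz
    simp only at hveqz
    rw [hveqz]
    set u := v z with hu
    have hu1 : ‖u‖ < 1 := hvlt z hz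
    have hnum : ‖1 + (A:ℂ) * u‖ < 1 + A := by
      calc ‖1 + (A:ℂ)*u‖ ≤ ‖1‖ + ‖(A:ℂ)*u‖ :=
            norm_add_le _ _
        _ = 1 + A * ‖u‖ := by
            rw [norm_one, norm_mul, Complex.norm_real, Real.norm_eq_abs, abs_of_pos hA0]
        _ < 1 + A := by nlinarith [norm_nonneg u]
    have hden : 1 + B ≤ ‖1 + (B:ℂ) * u‖ := by
      have h1 : ‖(B:ℂ)*u‖ ≤ -B := by
        rw [norm_mul, Complex.norm_real, Real.norm_eq_abs, abs_of_nonpos hB0]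
        nlinarith [norm_nonneg u]
      have h2 := abs_add_ge' 1 ((B:ℂ)*u)
      rw [norm_one] at h2
      linarith
    rw [norm_div]
    calc ‖1 + (A:ℂ)*u‖ / ‖1 + (B:ℂ)*u‖
        ≤ ‖1 + (A:ℂ)*u‖ / (1 + B) := by
          apply div_le_div_of_nonneg_left (norm_nonneg _) hBpos hden
      _ < (1 + A) / (1 + B) := (div_lt_div_iff_of_pos_right hBpos).mpr hnum
      _ = G := rfl
  have step2 : ∀ z ∈ unitDisk,
      ‖β‖ * ‖z * deriv p z / p z ^ n‖ < G + ‖p z‖ ^ δ := by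
    intro z hz
    have h1 := step1 z hz
    have he : β * (z * deriv p z) / p z ^ n =
        (p z ^ δ + β * (z * deriv p z) / p z ^ n) - p z ^ δ := by ring
    calc ‖β‖ * ‖z * deriv p z / p z ^ n‖
        = ‖β * (z * deriv p z) / p z ^ n‖ := by
          rw [← norm_mul]
          congr 1
          ring
      _ ≤ ‖p z ^ δ + β * (z * deriv p z) / p z ^ n‖ + ‖p z ^ δ‖ :=
          le_trans (le_of_eq (congrArg norm he)) (abs_sub_le'' _ _)
      _ < G + ‖p z‖ ^ δ := by rw [norm_pow]; linarith
  have hpA : AnalyticOnNhd ℂ p unitDisk := hp.analyticOnNhd hOpen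
  have hp' : DifferentiableOn ℂ (deriv p) unitDisk := (hpA.deriv).differentiableOn
  have hpc : ContinuousOn p unitDisk := hp.continuousOn
  set h : ℂ → ℂ := fun z => z * deriv p z / p z ^ n with hhdef
  have hhd : DifferentiableOn ℂ h unitDisk := by
    apply DifferentiableOn.div (differentiableOn_id.mul hp') (hp.pow n)
    exact fun z hz => pow_ne_zero n (hpne z hz)
  have hh0 : h 0 = 0 := by simp [hhdef]
  -- the bootstrap estimate
  have key : ∀ r : ℝ, 0 < r → r < 1 → (∀ ζ : ℂ, ‖ζ‖ ≤ r → ‖p ζ‖ ≤ 1.14) →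
      ∀ z : ℂ, ‖z‖ < r → ‖p z - 1‖ ≤ 0.136 := by
    intro r hr0 hr1 hb z hzr
    set R₂ := (G + (1.14:ℝ)^δ) / ‖β‖ with hR2
    have hR2pos : 0 < R₂ := by positivity
    have hball : Metric.ball (0:ℂ) r ⊆ unitDisk := Metric.ball_subset_ball hr1.le
    have hmapsTo : Set.MapsTo h (Metric.ball 0 r) (Metric.ball (h 0) R₂) := by
      intro x hx
      rw [hh0, Metric.mem_ball, Complex.dist_eq, sub_zero]
      have hxd : x ∈ unitDisk := hball hx
      rw [Metric.mem_ball, Complex.dist_eq, sub_zero] at hx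
      have hx1 : ‖p x‖ ≤ 1.14 := hb x hx.le
      have h2 := step2 x hxd
      have h3 : ‖p x‖ ^ δ ≤ (1.14:ℝ)^δ :=
        pow_le_pow_left₀ (norm_nonneg _) hx1 δ
      rw [hR2, lt_div_iff₀ hβpos]
      calc ‖h x‖ * ‖β‖ = ‖β‖ * ‖h x‖ := mul_comm _ _
        _ < G + ‖p x‖ ^ δ := h2
        _ ≤ G + 1.14 ^ δ := by linarith
    have hschwarz : ∀ x : ℂ, x ∈ Metric.ball (0:ℂ) r →
        ‖h x‖ ≤ R₂ / r * ‖x‖ := by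
      intro x hx
      have := Complex.dist_le_div_mul_dist_of_mapsTo_ball (hhd.mono hball) (hmapsTo.mono_right Metric.ball_subset_closedBall) hx
      simpa [hh0, Complex.dist_eq, sub_zero] using this
    rcases eq_or_ne z 0 with rfl | hz0
    · rw [hp0]; simp; norm_num
    -- FTC along the segment [0, z]
    have hintg : ∀ t : ℝ, t ∈ Set.uIcc (0:ℝ) 1 →
        HasDerivAt (fun s : ℝ => p ((s:ℂ) * z)) (deriv p ((t:ℂ)*z) * z) t := by
      intro t ht
      rw [Set.uIcc_of_le (by norm_num : (0:ℝ) ≤ 1)] at ht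
      have habs : ‖(t:ℂ)*z‖ < r := by
        rw [norm_mul, Complex.norm_real, Real.norm_eq_abs, _root_.abs_of_nonneg ht.1]
        calc t * ‖z‖ ≤ 1 * ‖z‖ := by
              apply mul_le_mul_of_nonneg_right ht.2 (norm_nonneg _)
          _ = ‖z‖ := one_mul _
          _ < r := hzr
      have htz : (t:ℂ)*z ∈ unitDisk := by rw [hmem]; linarith
      have hpz : HasDerivAt p (deriv p ((t:ℂ)*z)) ((t:ℂ)*z) :=
        (hp.differentiableAt (hOpen.mem_nhds htz)).hasDerivAt
      have h1 : HasDerivAt (fun s : ℂ => p (s*z)) (deriv p ((t:ℂ)*z) * z) (t:ℂ) := by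
        exact HasDerivAt.comp (t:ℂ) hpz (hasDerivAt_mul_const z)
      exact h1.comp_ofReal
    have hcont : ContinuousOn (fun t : ℝ => deriv p ((t:ℂ)*z) * z) (Set.uIcc (0:ℝ) 1) := by
      apply ContinuousOn.mul ?_ continuousOn_const
      have hco : (fun t : ℝ => deriv p ((t:ℂ)*z)) = (deriv p) ∘ (fun t : ℝ => (t:ℂ)*z) := rfl
      rw [hco]
      apply ContinuousOn.comp (hp'.continuousOn)
        ((Complex.continuous_ofReal.mul continuous_const).continuousOn)
      intro t ht
      rw [Set.uIcc_of_le (by norm_num : (0:ℝ) ≤ 1)] at ht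
      simp only [hmem, Pi.mul_apply]
      rw [norm_mul, Complex.norm_real, Real.norm_eq_abs, _root_.abs_of_nonneg ht.1]
      nlinarith [norm_nonneg z, ht.2]
    have hFTC := intervalIntegral.integral_eq_sub_of_hasDerivAt hintg
      (hcont.intervalIntegrable)
    have hbound : ∀ t ∈ Set.uIoc (0:ℝ) 1,
        ‖deriv p ((t:ℂ)*z) * z‖ ≤ R₂ / r * 1.14 ^ n * ‖z‖ := by
      intro t ht
      rw [Set.uIoc_of_le (by norm_num : (0:ℝ) ≤ 1)] at ht
      set x := (t:ℂ) * z with hxdef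
      have hx0 : x ≠ 0 := mul_ne_zero (by exact_mod_cast ht.1.ne') hz0
      have habs : ‖x‖ ≤ ‖z‖ := by
        rw [hxdef, norm_mul, Complex.norm_real, Real.norm_eq_abs, _root_.abs_of_nonneg ht.1.le]
        nlinarith [norm_nonneg z, ht.2]
      have hxr : ‖x‖ < r := lt_of_le_of_lt habs hzr
      have hxball : x ∈ Metric.ball (0:ℂ) r := by
        rw [Metric.mem_ball, Complex.dist_eq, sub_zero]; exact hxr
      have hpxn : p x ^ n ≠ 0 := pow_ne_zero n (hpne x (hball hxball))
      have hd : deriv p x = h x * p x ^ n / x := by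
        show deriv p x = (x * deriv p x / p x ^ n) * p x ^ n / x
        rw [div_mul_cancel₀ _ hpxn, mul_comm x (deriv p x), mul_div_assoc, div_self hx0, mul_one]
      have hpow : ‖p x‖ ^ n ≤ (1.14:ℝ)^n :=
        pow_le_pow_left₀ (norm_nonneg _) (hb x (le_of_lt hxr)) n
      have habsx : 0 < ‖x‖ := norm_pos_iff.mpr hx0
      rw [norm_mul, hd, norm_div, norm_mul, norm_pow]
      calc ‖h x‖ * ‖p x‖ ^ n / ‖x‖ * ‖z‖
          ≤ (R₂/r * ‖x‖) * (1.14:ℝ)^n / ‖x‖ * ‖z‖ := by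
            gcongr
            all_goals first
              | exact hschwarz x hxball
              | exact hpow
        _ = R₂ / r * 1.14 ^ n * ‖z‖ := by field_simp
    have hnorm := intervalIntegral.norm_integral_le_of_norm_le_const hbound
    rw [hFTC] at hnorm
    have hend : (fun s : ℝ => p ((s:ℂ) * z)) 1 - (fun s : ℝ => p ((s:ℂ) * z)) 0 = p z - 1 := by
      norm_num [hp0]
    rw [hend] at hnorm
    have hkey := key_numeric' n hn δ G hG1 ω₀ omega_ge' (‖β‖) hβ
    have hR2n : R₂ * 1.14 ^ n ≤ 0.136 := by
      rw [hR2, div_mul_eq_mul_div, div_le_iff₀ hβpos]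
      linarith
    calc ‖p z - 1‖ = ‖p z - 1‖ := rfl
      _ ≤ R₂ / r * 1.14 ^ n * ‖z‖ * |1 - 0| := hnorm
      _ = R₂ * 1.14 ^ n * (‖z‖ / r) := by
          rw [show |(1:ℝ) - 0| = 1 by norm_num]
          field_simp
      _ ≤ 0.136 * 1 := by
          apply mul_le_mul hR2n ?_ (by positivity) (by norm_num)
          rw [div_le_one hr0]
          exact hzr.le
      _ = 0.136 := mul_one _
  -- sup argument: |p| is bounded by 1.14 on the whole disk, hence |p - 1| ≤ 0.136
  set S := {r : ℝ | r < 1 ∧ ∀ ζ : ℂ, ‖ζ‖ ≤ r → ‖p ζ‖ ≤ 1.14} with hSdef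
  have hS0 : (0:ℝ) ∈ S := by
    constructor
    · norm_num
    · intro ζ hζ
      have hζ0 : ζ = 0 := by
        have := norm_nonneg ζ
        have : ‖ζ‖ = 0 := le_antisymm hζ this
        exact norm_eq_zero.mp this
      rw [hζ0, hp0]; norm_num
  have hSbdd : BddAbove S := ⟨1, fun r hr => hr.1.le⟩
  have hSne : S.Nonempty := ⟨0, hS0⟩
  have hSdc : ∀ r ∈ S, ∀ r' ≤ r, r' ∈ S := by
    intro r hr r' hr'
    exact ⟨lt_of_le_of_lt hr' hr.1, fun ζ hζ => hr.2 ζ (le_trans hζ hr')⟩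
  have heps : ∃ ε : ℝ, 0 < ε ∧ ε ∈ S := by
    have hc : ContinuousAt p 0 := (hpc.continuousAt (hOpen.mem_nhds h0mem))
    rw [Metric.continuousAt_iff] at hc
    obtain ⟨d, hd0, hd⟩ := hc 0.14 (by norm_num)
    refine ⟨min (d/2) (1/2), by positivity, ⟨?_, ?_⟩⟩
    · calc min (d/2) (1/2) ≤ 1/2 := min_le_right _ _
        _ < 1 := by norm_num
    · intro ζ hζ
      have h2 : dist (p ζ) (p 0) < 0.14 := by
        apply hd
        rw [Complex.dist_eq, sub_zero]
        calc ‖ζ‖ ≤ min (d/2) (1/2) := hζ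
          _ ≤ d/2 := min_le_left _ _
          _ < d := by linarith
      rw [hp0, Complex.dist_eq] at h2
      calc ‖p ζ‖ = ‖(p ζ - 1) + 1‖ := by ring_nf
        _ ≤ ‖p ζ - 1‖ + ‖1‖ := norm_add_le _ _
        _ ≤ 0.14 + 1 := by rw [norm_one]; linarith
        _ ≤ 1.14 := by norm_num
  obtain ⟨ε, hε0, hεS⟩ := heps
  set s₀ := sSup S with hs₀def
  have hs₀pos : 0 < s₀ := lt_of_lt_of_le hε0 (le_csSup hSbdd hεS)
  have hs₀le1 : s₀ ≤ 1 := csSup_le hSne (fun r hr => hr.1.le)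
  have hopenb : ∀ z : ℂ, ‖z‖ < s₀ → ‖p z‖ ≤ 1.14 := by
    intro z hz
    obtain ⟨r, hrS, hzr⟩ := exists_lt_of_lt_csSup hSne hz
    exact hrS.2 z hzr.le
  have hs₀1 : s₀ = 1 := by
    by_contra hs1
    have hlt : s₀ < 1 := lt_of_le_of_ne hs₀le1 hs1
    -- extension to the closed ball by continuity
    have hext : ∀ M : ℝ, (∀ ζ : ℂ, ‖ζ‖ < s₀ → ‖p ζ‖ ≤ M) →
        ∀ ζ : ℂ, ‖ζ‖ ≤ s₀ → ‖p ζ‖ ≤ M := by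
      intro M hM ζ hζ
      rcases lt_or_eq_of_le hζ with hlt' | heq
      · exact hM ζ hlt'
      · have hζd : ζ ∈ unitDisk := by rw [hmem]; rw [← heq] at hlt; exact hlt
        have hcont1 : ContinuousAt (fun t : ℝ => ‖p ((t:ℂ) * ζ)‖) 1 := by
          apply continuous_norm.continuousAt.comp
          apply ContinuousAt.comp
          · have h1ζ : ((1:ℝ):ℂ) * ζ = ζ := by norm_num
            rw [h1ζ]
            exact hpc.continuousAt (hOpen.mem_nhds hζd)
          · exact (Complex.continuous_ofReal.mul continuous_const).continuousAt
        have hval : ‖p (((1:ℝ):ℂ) * ζ)‖ = ‖p ζ‖ := by norm_num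
        have hten : Filter.Tendsto (fun t : ℝ => ‖p ((t:ℂ) * ζ)‖)
            (nhdsWithin 1 (Set.Iio 1)) (nhds (‖p ζ‖)) := by
          rw [← hval]
          exact (hcont1.tendsto).mono_left nhdsWithin_le_nhds
        apply le_of_tendsto hten
        filter_upwards [Ioo_mem_nhdsLT_of_mem
          (show (1:ℝ) ∈ Set.Ioc 0 1 by constructor <;> norm_num)] with t ht
        apply hM
        rw [norm_mul, Complex.norm_real, Real.norm_eq_abs, _root_.abs_of_nonneg ht.1.le, ← heq]
        calc t * ‖ζ‖ < 1 * ‖ζ‖ := by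
              apply mul_lt_mul_of_pos_right ht.2 ?_
              rw [← heq] at hs₀pos; exact hs₀pos
          _ = ‖ζ‖ := one_mul _
    have hclosed : ∀ ζ : ℂ, ‖ζ‖ ≤ s₀ → ‖p ζ‖ ≤ 1.14 := hext 1.14 hopenb
    have hsmall : ∀ ζ : ℂ, ‖ζ‖ < s₀ → ‖p ζ‖ ≤ 1.136 := by
      intro ζ hζ
      have h1 := key s₀ hs₀pos hlt hclosed ζ hζ
      calc ‖p ζ‖ = ‖(p ζ - 1) + 1‖ := by ring_nf
        _ ≤ ‖p ζ - 1‖ + ‖1‖ := norm_add_le _ _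
        _ ≤ 0.136 + 1 := by rw [norm_one]; linarith
        _ ≤ 1.136 := by norm_num
    have hsmall' : ∀ ζ : ℂ, ‖ζ‖ ≤ s₀ → ‖p ζ‖ ≤ 1.136 := hext 1.136 hsmall
    set U := {z : ℂ | z ∈ unitDisk ∧ ‖p z‖ < 1.14} with hUdef
    have hUopen : IsOpen U := by
      have : U = unitDisk ∩ (p ⁻¹' (Metric.ball 0 1.14)) ∩ unitDisk := by
        ext z
        simp only [hUdef, Set.mem_setOf_eq, Set.mem_inter_iff, Set.mem_preimage,
          Metric.mem_ball, Complex.dist_eq, sub_zero]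
        tauto
      rw [this]
      exact (hpc.isOpen_inter_preimage hOpen Metric.isOpen_ball).inter hOpen
    have hsubU : Metric.closedBall (0:ℂ) s₀ ⊆ U := by
      intro z hz
      rw [Metric.mem_closedBall, Complex.dist_eq, sub_zero] at hz
      refine ⟨by rw [hmem]; linarith, ?_⟩
      calc ‖p z‖ ≤ 1.136 := hsmall' z hz
        _ < 1.14 := by norm_num
    obtain ⟨d, hd0, hdsub⟩ := (isCompact_closedBall (0:ℂ) s₀).exists_thickening_subset_open
      hUopen hsubU
    set s' := min (s₀ + d/2) ((s₀+1)/2) with hs'def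
    have hs's : s₀ < s' := by
      apply lt_min (by linarith) (by linarith)
    have hs'S : s' ∈ S := by
      constructor
      · calc s' ≤ (s₀+1)/2 := min_le_right _ _
          _ < 1 := by linarith
      · intro ζ hζ
        have hζU : ζ ∈ U := by
          apply hdsub
          rw [Metric.mem_thickening_iff]
          refine ⟨(if ‖ζ‖ ≤ s₀ then ζ else (s₀ / ‖ζ‖ : ℝ) • ζ), ?_, ?_⟩
          · split_ifs with hcase
            · rw [Metric.mem_closedBall, Complex.dist_eq, sub_zero]; exact hcase
            · rw [Metric.mem_closedBall, Complex.dist_eq, sub_zero]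
              push_neg at hcase
              have hζpos : 0 < ‖ζ‖ := lt_trans hs₀pos hcase
              rw [Complex.real_smul, norm_mul, Complex.norm_real, Real.norm_eq_abs]
              rw [_root_.abs_of_nonneg (by positivity)]
              rw [div_mul_cancel₀ _ hζpos.ne']
          · split_ifs with hcase
            · rw [dist_self]; exact hd0
            · push_neg at hcase
              have hζpos : 0 < ‖ζ‖ := lt_trans hs₀pos hcase
              have hdist : dist ζ ((s₀ / ‖ζ‖ : ℝ) • ζ) = ‖ζ‖ - s₀ := by
                rw [Complex.dist_eq, Complex.real_smul]
                have : ζ - ((s₀ / ‖ζ‖ : ℝ):ℂ) * ζ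
                    = ((1 - s₀ / ‖ζ‖ : ℝ):ℂ) * ζ := by push_cast; ring
                rw [this, norm_mul, Complex.norm_real, Real.norm_eq_abs]
                rw [_root_.abs_of_nonneg (by
                  rw [sub_nonneg, div_le_one hζpos]; exact hcase.le)]
                field_simp
              rw [hdist]
              have hζs' : ‖ζ‖ ≤ s₀ + d/2 := le_trans hζ (min_le_left _ _)
              linarith
        exact hζU.2.le
    have := le_csSup hSbdd hs'S
    rw [← hs₀def] at this
    linarith
  -- the global bound
  have main2 : ∀ z ∈ unitDisk, ‖p z - 1‖ ≤ 0.136 := by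
    intro z hz
    rw [hmem] at hz
    rw [← hs₀1] at hz
    obtain ⟨r, hrS, hzr⟩ := exists_lt_of_lt_csSup hSne hz
    have hr0 : 0 < r := lt_of_le_of_lt (norm_nonneg z) hzr
    exact key r hr0 hrS.1 hrS.2 z hzr
  -- pointwise geometric facts
  have hfacts : ∀ z ∈ unitDisk, ‖p z ^ 2 - 1‖ ≤ 0.291 ∧
      0 < (p z ^ 2).re ∧ 0 < ((2:ℂ) - p z ^ 2).re ∧ 0 < (p z).re := by
    intro z hz
    have hz1 := main2 z hz
    have habs1 : ‖p z + 1‖ ≤ 2.136 := by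
      calc ‖p z + 1‖ = ‖(p z - 1) + 2‖ := by ring_nf
        _ ≤ ‖p z - 1‖ + ‖2‖ := norm_add_le _ _
        _ ≤ 0.136 + 2 := by rw [Complex.norm_two]; linarith
        _ ≤ 2.136 := by norm_num
    have h291 : ‖p z ^ 2 - 1‖ ≤ 0.291 := by
      calc ‖p z ^ 2 - 1‖ = ‖(p z - 1) * (p z + 1)‖ := by ring_nf
        _ = ‖p z - 1‖ * ‖p z + 1‖ := norm_mul _ _
        _ ≤ 0.136 * 2.136 := by
            apply mul_le_mul hz1 habs1 (norm_nonneg _) (by norm_num)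
        _ ≤ 0.291 := by norm_num
    have hre2 : 0 < (p z ^ 2).re := by
      have h1 : |(p z ^ 2 - 1).re| ≤ 0.291 := le_trans (Complex.abs_re_le_norm _) h291
      rw [abs_le] at h1
      have h2 : (p z ^ 2 - 1).re = (p z ^ 2).re - 1 := by simp [Complex.sub_re]
      linarith [h1.1]
    have hre2' : 0 < ((2:ℂ) - p z ^ 2).re := by
      have h1 : |(p z ^ 2 - 1).re| ≤ 0.291 := le_trans (Complex.abs_re_le_norm _) h291
      rw [abs_le] at h1
      have h2 : ((2:ℂ) - p z ^ 2).re = 2 - (p z ^ 2).re := by simp [Complex.sub_re]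
      have h3 : (p z ^ 2 - 1).re = (p z ^ 2).re - 1 := by simp [Complex.sub_re]
      linarith [h1.2]
    have hrea : 0 < (p z).re := by
      have h1 : |(p z - 1).re| ≤ 0.136 := le_trans (Complex.abs_re_le_norm _) hz1
      rw [abs_le] at h1
      have h2 : (p z - 1).re = (p z).re - 1 := by simp [Complex.sub_re]
      linarith [h1.1]
    exact ⟨h291, hre2, hre2', hrea⟩
  set w : ℂ → ℂ := fun z => (Complex.log (p z ^ 2) - Complex.log (2 - p z ^ 2)) / 2 with hwdef
  refine ⟨w, ?_, ?_, ?_, ?_⟩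
  · -- differentiability
    intro z hz
    obtain ⟨h291, hre2, hre2', hrea⟩ := hfacts z hz
    have hpz : DifferentiableAt ℂ p z := hp.differentiableAt (hOpen.mem_nhds hz)
    have d1 : DifferentiableAt ℂ (fun z => Complex.log (p z ^ 2)) z :=
      (Complex.differentiableAt_log (Complex.mem_slitPlane_iff.mpr (Or.inl hre2))).comp (f := fun z => p z ^ 2) z
        (hpz.pow 2)
    have d2 : DifferentiableAt ℂ (fun z => Complex.log ((2:ℂ) - p z ^ 2)) z :=
      (Complex.differentiableAt_log (Complex.mem_slitPlane_iff.mpr (Or.inl hre2'))).comp (f := fun z => (2:ℂ) - p z ^ 2) z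
        ((hpz.pow 2).const_sub 2)
    exact ((d1.sub d2).div_const 2).differentiableWithinAt
  · -- value at 0
    rw [hwdef]
    norm_num [hp0, Complex.log_one]
  · -- bound
    intro z hz
    obtain ⟨h291, hre2, hre2', hrea⟩ := hfacts z hz
    have hl1 : ‖Complex.log (p z ^ 2)‖ ≤ 0.36 := abs_log_le' h291
    have hl2 : ‖Complex.log ((2:ℂ) - p z ^ 2)‖ ≤ 0.36 := by
      apply abs_log_le'
      have he : (2:ℂ) - p z ^ 2 - 1 = -(p z ^ 2 - 1) := by ring
      rw [he, norm_neg]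
      exact h291
    have : ‖w z‖ ≤ (0.36 + 0.36)/2 := by
      rw [hwdef]
      simp only [norm_div, Complex.norm_two]
      apply div_le_div_of_nonneg_right ?_ (by norm_num)
      calc ‖Complex.log (p z ^ 2) - Complex.log ((2:ℂ) - p z ^ 2)‖
          ≤ ‖Complex.log (p z ^ 2)‖ + ‖Complex.log ((2:ℂ) - p z ^ 2)‖ :=
            abs_sub_le'' _ _
        _ ≤ 0.36 + 0.36 := by linarith
    calc ‖w z‖ ≤ (0.36 + 0.36)/2 := this
      _ < 1 := by norm_num
  · -- the defining equation
    intro z hz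
    obtain ⟨h291, hre2, hre2', hrea⟩ := hfacts z hz
    have ha2ne : p z ^ 2 ≠ 0 := by
      intro h0; rw [h0] at hre2; simp at hre2
    have h2a2ne : (2:ℂ) - p z ^ 2 ≠ 0 := by
      intro h0; rw [h0] at hre2'; simp at hre2'
    have h2w : 2 * w z = Complex.log (p z ^ 2) - Complex.log (2 - p z ^ 2) := by
      rw [hwdef]; field_simp
    have hX2 : Complex.exp (w z) ^ 2 = p z ^ 2 / (2 - p z ^ 2) := by
      rw [sq, ← Complex.exp_add, ← two_mul, h2w, Complex.exp_sub,
        Complex.exp_log ha2ne, Complex.exp_log h2a2ne]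
    set X := Complex.exp (w z) with hXdef
    have hXne : X ≠ 0 := Complex.exp_ne_zero _
    have hX2' : X ^ 2 * (2 - p z ^ 2) = p z ^ 2 := by
      rw [hX2]; field_simp
    have hsinh : Complex.sinh (w z) = (p z ^ 2 - 1) * Complex.cosh (w z) := by
      rw [Complex.sinh, Complex.cosh, Complex.exp_neg, ← hXdef]
      field_simp
      linear_combination hX2'
    have hcosh_ne : Complex.cosh (w z) ≠ 0 := by
      intro h0
      rw [Complex.cosh, Complex.exp_neg, ← hXdef] at h0
      have hX21 : X ^ 2 = -1 := by
        field_simp at h0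
        linear_combination h0
      rw [hX21] at hX2'
      have hfalse : (-2 : ℂ) = 0 := by linear_combination hX2'
      norm_num at hfalse
    have htanh : Complex.tanh (w z) = p z ^ 2 - 1 := by
      rw [Complex.tanh_eq_sinh_div_cosh, hsinh, mul_div_assoc, div_self hcosh_ne, mul_one]
    show p z = bean (w z)
    rw [bean, htanh, show (1:ℂ) + (p z ^ 2 - 1) = p z ^ 2 by ring]
    exact (sq_cpow_half hrea).symm
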